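/- For every positive integer c, the limit as k → ∞ of (1/(2k+1))·log( ( ∑_{j=0}^{k} ([k choose j]_{2k+1})^4 )^c ) exists and equals (8c/π)·Λ(π/4) = (2c·Vol_Oct)/(2π), where Vol_Oct = 8·Λ(π/4). (This is the Extended Volume Conjecture verified for universal hyperbolic links: for a universal hyperbolic link (N_P, L_P) built from a simple polyhedron P with c vertices, the evaluation at e^{2πi/(2k+1)} of its (2k+1)-colored Jones invariant equals ( ∑_{j=0}^{k} ([k choose j]_{2k+1})^4 )^c, and the hyperbolic volume of N_P − L_P is 2c·Vol_Oct.) -/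

import Mathlib

open Real Filter Finset

/-- The Lobachevsky function Λ(x) = −∫₀ˣ log|2 sin s| ds. -/
noncomputable def Lob (x : ℝ) : ℝ := -∫ s in (0:ℝ)..x, Real.log |2 * Real.sin s|

/-- The volume of the regular ideal hyperbolic octahedron: `Vol_Oct = 8Λ(π/4)`. -/
noncomputable def VolOct : ℝ := 8 * Lob (Real.pi / 4)

/-- Evaluated quantum integer `[n]_d = sin(nπ/d)/sin(π/d)`. -/
noncomputable def qInt (d n : ℕ) : ℝ := Real.sin (n * Real.pi / d) / Real.sin (Real.pi / d)

/-- Evaluated quantum factorial `[n]_d! = ∏_{i=1}^n [i]_d`. -/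
noncomputable def qFact (d n : ℕ) : ℝ := ∏ i ∈ Finset.Icc 1 n, qInt d i

/-- Evaluated quantum binomial `[k choose j]_d = [k]_d! / ([j]_d! [k−j]_d!)`. -/
noncomputable def qBinom (d k j : ℕ) : ℝ := qFact d k / (qFact d j * qFact d (k - j))

open MeasureTheory intervalIntegral

-- === from a.lean ===
lemma II_log01 : IntervalIntegrable Real.log volume 0 1 := by
  have h : IntervalIntegrable (fun x => -Real.log x) volume 0 1 := by
    apply intervalIntegrable_deriv_of_nonneg (g := fun x => x - x * Real.log x)
    · exact (continuous_id.sub Real.continuous_mul_log).continuousOn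
    · intro x hx
      simp only [min_eq_left zero_le_one, max_eq_right zero_le_one] at hx
      have hx0 : x ≠ 0 := ne_of_gt hx.1
      have h1 : HasDerivAt (fun x : ℝ => x - x * Real.log x) (1 - (1 * Real.log x + x * x⁻¹)) x :=
        (hasDerivAt_id x).sub ((hasDerivAt_id x).mul (Real.hasDerivAt_log hx0))
      convert h1 using 1
      field_simp
      ring
    · intro x hx
      simp only [min_eq_left zero_le_one, max_eq_right zero_le_one] at hx
      simp only [neg_nonneg]
      exact Real.log_nonpos hx.1.le hx.2.le
  have h2 := h.neg
  have : (-fun x => -Real.log x) = Real.log := by funext x; simp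
  rwa [this] at h2

lemma II_log : IntervalIntegrable Real.log volume 0 (π/2) := by
  apply II_log01.trans
  apply intervalIntegrable_log
  intro h
  rw [Set.mem_uIcc] at h
  have := pi_gt_three
  rcases h with ⟨h1, _⟩ | ⟨_, h2⟩ <;> linarith

lemma II_logsin : IntervalIntegrable (fun s => Real.log (Real.sin s)) volume 0 (π/2) := by
  have hb : IntervalIntegrable (fun x => |Real.log x| + Real.log (π/2)) volume 0 (π/2) :=
    II_log.abs.add (intervalIntegrable_const)
  apply hb.mono_fun'
  · exact (Real.measurable_log.comp Real.measurable_sin).aestronglyMeasurable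
  · have hmeas : MeasurableSet (Set.uIoc (0:ℝ) (π/2)) := measurableSet_uIoc
    filter_upwards [ae_restrict_mem hmeas] with x hx
    rw [Set.uIoc_of_le (by positivity)] at hx
    have hx0 : 0 < x := hx.1
    have hx2 : x ≤ π / 2 := hx.2
    have hs0 : 0 < Real.sin x := Real.sin_pos_of_pos_of_lt_pi hx0 (by linarith [pi_gt_three])
    have hup : Real.log (Real.sin x) ≤ Real.log x :=
      Real.log_le_log hs0 (Real.sin_le hx0.le)
    have hlo : Real.log x - Real.log (π/2) ≤ Real.log (Real.sin x) := by
      have h1 : 2 / π * x ≤ Real.sin x := Real.mul_le_sin hx0.le hx2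
      have h2 : Real.log (2 / π * x) ≤ Real.log (Real.sin x) :=
        Real.log_le_log (by positivity) h1
      have h3 : Real.log (2 / π * x) = Real.log x - Real.log (π/2) := by
        rw [Real.log_mul (by positivity) hx0.ne', Real.log_div two_ne_zero (by positivity),
          Real.log_div (by positivity) two_ne_zero]
        ring
      linarith
    have hpos : 0 ≤ Real.log (π/2) := Real.log_nonneg (by linarith [pi_gt_three])
    simp only [Real.norm_eq_abs]
    rw [abs_le]
    constructor
    · have := neg_abs_le (Real.log x)
      linarith
    · have := le_abs_self (Real.log x)
      linarith


-- === from b.lean ===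
lemma II_logsin_half2 : IntervalIntegrable (fun s => Real.log (Real.sin s)) volume (π/2) π := by
  have h := (II_logsin.comp_sub_left π).symm
  have he : (fun x => Real.log (Real.sin (π - x))) = fun x => Real.log (Real.sin x) := by
    funext x; rw [Real.sin_pi_sub]
  rw [he] at h
  have e1 : π - 0 = π := by ring
  have e2 : π - π/2 = π/2 := by ring
  rwa [e1, e2] at h

lemma II_logcos : IntervalIntegrable (fun s => Real.log (Real.cos s)) volume 0 (π/2) := by
  have h := (II_logsin.comp_sub_left (π/2)).symm
  have he : (fun x => Real.log (Real.sin (π/2 - x))) = fun x => Real.log (Real.cos x) := by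
    funext x; rw [Real.sin_pi_div_two_sub]
  rw [he] at h
  have e1 : π/2 - π/2 = 0 := by ring
  rwa [e1, sub_zero] at h

lemma integral_logsin_half : ∫ s in (0:ℝ)..(π/2), Real.log (Real.sin s) = -(π/2) * Real.log 2 := by
  set I := ∫ s in (0:ℝ)..(π/2), Real.log (Real.sin s) with hI
  have hsecond : ∫ s in (π/2)..π, Real.log (Real.sin s) = I := by
    have h := integral_comp_sub_left (a := π/2) (b := π) (fun s => Real.log (Real.sin s)) π
    simp only [Real.sin_pi_sub] at h
    rw [h]
    have e1 : π - π = 0 := by ring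
    have e2 : π - π/2 = π/2 := by ring
    rw [e1, e2]
  have hfull : ∫ s in (0:ℝ)..π, Real.log (Real.sin s) = 2 * I := by
    rw [← integral_add_adjacent_intervals II_logsin II_logsin_half2, hsecond]
    ring
  have hdouble : ∫ u in (0:ℝ)..(π/2), Real.log (Real.sin (2*u)) = I := by
    have h := integral_comp_mul_left (a := (0:ℝ)) (b := π/2) (fun s => Real.log (Real.sin s))
      (c := (2:ℝ)) two_ne_zero
    rw [h]
    have e2 : 2 * (π/2) = π := by ring
    rw [mul_zero, e2, smul_eq_mul, hfull]
    ring
  have hcos : ∫ s in (0:ℝ)..(π/2), Real.log (Real.cos s) = I := by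
    have h := integral_comp_sub_left (a := (0:ℝ)) (b := π/2) (fun s => Real.log (Real.sin s)) (π/2)
    simp only [Real.sin_pi_div_two_sub] at h
    rw [h]
    have e1 : π/2 - π/2 = 0 := by ring
    rw [e1, sub_zero]
  have hsplit : ∫ u in (0:ℝ)..(π/2), Real.log (Real.sin (2*u))
      = ∫ u in (0:ℝ)..(π/2), (Real.log 2 + (Real.log (Real.sin u) + Real.log (Real.cos u))) := by
    apply intervalIntegral.integral_congr_ae
    have hae : ∀ᵐ x : ℝ, x ≠ π/2 := by
      have : (volume ({π/2} : Set ℝ)) = 0 := Real.volume_singleton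
      exact (MeasureTheory.measure_eq_zero_iff_ae_notMem.mp this).mono (fun x hx => hx)
    filter_upwards [hae] with x hx hmem
    rw [Set.uIoc_of_le (by positivity)] at hmem
    have hx0 : 0 < x := hmem.1
    have hx2 : x < π/2 := lt_of_le_of_ne hmem.2 hx
    have hs : 0 < Real.sin x := Real.sin_pos_of_pos_of_lt_pi hx0 (by linarith [pi_gt_three])
    have hc : 0 < Real.cos x := Real.cos_pos_of_mem_Ioo ⟨by linarith [pi_gt_three], hx2⟩
    rw [Real.sin_two_mul, Real.log_mul (by positivity) hc.ne', Real.log_mul two_ne_zero hs.ne']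
    ring
  have hrhs : ∫ u in (0:ℝ)..(π/2), (Real.log 2 + (Real.log (Real.sin u) + Real.log (Real.cos u)))
      = (π/2) * Real.log 2 + (I + I) := by
    rw [integral_add intervalIntegrable_const (II_logsin.add II_logcos),
      integral_add II_logsin II_logcos, hcos, intervalIntegral.integral_const]
    rw [← hI]
    simp
  have h5 := hdouble
  rw [hsplit, hrhs] at h5
  linarith


-- === from c.lean ===
lemma g_mono {s t : ℝ} (hs : 0 < s) (hst : s ≤ t) (ht : t ≤ π/2) :
    Real.log (Real.sin s) ≤ Real.log (Real.sin t) := by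
  have h1 : Real.sin s ≤ Real.sin t :=
    Real.sin_le_sin_of_le_of_le_pi_div_two (by linarith [pi_pos]) ht hst
  have h2 : 0 < Real.sin s := Real.sin_pos_of_pos_of_lt_pi hs (by linarith [pi_pos])
  exact Real.log_le_log h2 h1

-- the subinterval integrability
lemma II_sub {u v : ℝ} (hu : 0 ≤ u) (huv : u ≤ v) (hv : v ≤ π/2) :
    IntervalIntegrable (fun s => Real.log (Real.sin s)) volume u v := by
  have hpi : (0:ℝ) ≤ π/2 := by positivity
  apply II_logsin.mono_set
  rw [Set.uIcc_of_le huv, Set.uIcc_of_le hpi]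
  exact Set.Icc_subset_Icc hu hv

section riemann
variable {k : ℕ}

/-- step bound: for `0 ≤ u`, `u ≤ v`, `v ≤ π/2`:
`∫ u..v ≤ (v-u) * log sin v` and `(v-u) * log sin u ≤ ∫ u..v` (latter needs `0 < u`). -/
lemma step_upper {u v : ℝ} (hu : 0 ≤ u) (huv : u ≤ v) (hv : v ≤ π/2) :
    ∫ s in u..v, Real.log (Real.sin s) ≤ (v - u) * Real.log (Real.sin v) := by
  rw [intervalIntegral.integral_of_le huv]
  have hint : IntegrableOn (fun s => Real.log (Real.sin s)) (Set.Ioc u v) volume :=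
    (intervalIntegrable_iff_integrableOn_Ioc_of_le huv).mp (II_sub hu huv hv)
  calc ∫ s in Set.Ioc u v, Real.log (Real.sin s)
      ≤ ∫ _ in Set.Ioc u v, Real.log (Real.sin v) := by
        apply setIntegral_mono_on hint (integrableOn_const (by simp))
          measurableSet_Ioc
        intro x hx
        exact g_mono (lt_of_le_of_lt hu hx.1) hx.2 hv
    _ = (v - u) * Real.log (Real.sin v) := by
        rw [setIntegral_const, Real.volume_real_Ioc_of_le huv, smul_eq_mul]

lemma step_lower {u v : ℝ} (hu : 0 < u) (huv : u ≤ v) (hv : v ≤ π/2) :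
    (v - u) * Real.log (Real.sin u) ≤ ∫ s in u..v, Real.log (Real.sin s) := by
  rw [intervalIntegral.integral_of_le huv]
  have hint : IntegrableOn (fun s => Real.log (Real.sin s)) (Set.Ioc u v) volume :=
    (intervalIntegrable_iff_integrableOn_Ioc_of_le huv).mp (II_sub hu.le huv hv)
  calc (v - u) * Real.log (Real.sin u)
      = ∫ _ in Set.Ioc u v, Real.log (Real.sin u) := by
        rw [setIntegral_const, Real.volume_real_Ioc_of_le huv, smul_eq_mul]
    _ ≤ ∫ s in Set.Ioc u v, Real.log (Real.sin s) := by
        apply setIntegral_mono_on (integrableOn_const (by simp)) hint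
          measurableSet_Ioc
        intro x hx
        exact g_mono hu hx.1.le (le_trans hx.2 hv)

lemma pt_le {k n : ℕ} (hn : n ≤ k) : (n : ℝ) * π / (2*(k:ℝ)+1) ≤ π/2 := by
  have hk : (0:ℝ) < 2*(k:ℝ)+1 := by positivity
  rw [div_le_iff₀ hk]
  have hn' : (n:ℝ) ≤ k := Nat.cast_le.mpr hn
  nlinarith [pi_pos]

/-- Lower Riemann bound. -/
lemma riemann_lower {k n : ℕ} (hn : n ≤ k) :
    ∫ s in (0:ℝ)..((n:ℝ) * π / (2*(k:ℝ)+1)), Real.log (Real.sin s)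
      ≤ (π / (2*(k:ℝ)+1)) * ∑ i ∈ Icc 1 n, Real.log (Real.sin ((i:ℝ) * π / (2*(k:ℝ)+1))) := by
  set h : ℝ := π / (2*(k:ℝ)+1) with hh
  have hk : (0:ℝ) < 2*(k:ℝ)+1 := by positivity
  have hhpos : 0 < h := by positivity
  set a : ℕ → ℝ := fun i => (i:ℝ) * π / (2*(k:ℝ)+1) with ha
  have hastep : ∀ i : ℕ, a (i+1) - a i = h := by
    intro i; simp only [ha, hh]; push_cast; ring
  have hamono : ∀ i : ℕ, a i ≤ a (i+1) := fun i => by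
    have := hastep i; linarith
  have hapos : ∀ i : ℕ, 0 ≤ a i := fun i => by positivity
  have haub : ∀ i : ℕ, i ≤ n → a i ≤ π/2 := fun i hi => pt_le (le_trans hi hn)
  have hint : ∀ i : ℕ, i < n → IntervalIntegrable (fun s => Real.log (Real.sin s)) volume
      (a i) (a (i+1)) := fun i hi => II_sub (hapos i) (hamono i) (haub (i+1) hi)
  have hsum := intervalIntegral.sum_integral_adjacent_intervals (μ := volume)
    (f := fun s => Real.log (Real.sin s)) (a := a) (n := n) hint
  have ha0 : a 0 = 0 := by simp [ha]
  rw [ha0] at hsum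
  rw [← hsum]
  have hstep : ∀ i ∈ range n, ∫ s in (a i)..(a (i+1)), Real.log (Real.sin s)
      ≤ h * Real.log (Real.sin (a (i+1))) := by
    intro i hi
    rw [mem_range] at hi
    have := step_upper (hapos i) (hamono i) (haub (i+1) hi)
    rw [hastep i] at this
    exact this
  calc ∑ i ∈ range n, ∫ s in (a i)..(a (i+1)), Real.log (Real.sin s)
      ≤ ∑ i ∈ range n, h * Real.log (Real.sin (a (i+1))) := Finset.sum_le_sum hstep
    _ = h * ∑ i ∈ Icc 1 n, Real.log (Real.sin (a i)) := by
        rw [Finset.mul_sum, ← Finset.Ico_add_one_right_eq_Icc, Finset.sum_Ico_eq_sum_range]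
        apply Finset.sum_congr rfl
        intro i _
        rw [add_comm 1 i]

/-- Upper Riemann bound. -/
lemma riemann_upper {k n : ℕ} (hn : n ≤ k) (hn1 : 1 ≤ n) :
    (π / (2*(k:ℝ)+1)) * ∑ i ∈ Icc 1 n, Real.log (Real.sin ((i:ℝ) * π / (2*(k:ℝ)+1)))
      ≤ ∫ s in ((1:ℝ) * π / (2*(k:ℝ)+1))..((n:ℝ) * π / (2*(k:ℝ)+1)), Real.log (Real.sin s) := by
  set h : ℝ := π / (2*(k:ℝ)+1) with hh
  have hk : (0:ℝ) < 2*(k:ℝ)+1 := by positivity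
  have hhpos : 0 < h := by positivity
  set a : ℕ → ℝ := fun i => (i:ℝ) * π / (2*(k:ℝ)+1) with ha
  have hastep : ∀ i : ℕ, a (i+1) - a i = h := by
    intro i; simp only [ha, hh]; push_cast; ring
  have hamono : ∀ i : ℕ, a i ≤ a (i+1) := fun i => by
    have := hastep i; linarith
  have hapos : ∀ i : ℕ, 1 ≤ i → 0 < a i := by
    intro i hi
    have : (1:ℝ) ≤ i := Nat.one_le_cast.mpr hi
    simp only [ha]
    have := pi_pos
    positivity
  have haub : ∀ i : ℕ, i ≤ n → a i ≤ π/2 := fun i hi => pt_le (le_trans hi hn)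
  have hint : ∀ i ∈ Set.Ico 1 n, IntervalIntegrable (fun s => Real.log (Real.sin s)) volume
      (a i) (a (i+1)) := by
    intro i hi
    rw [Set.mem_Ico] at hi
    exact II_sub (le_of_lt (hapos i hi.1)) (hamono i) (haub (i+1) hi.2)
  have hsum := intervalIntegral.sum_integral_adjacent_intervals_Ico (μ := volume)
    (f := fun s => Real.log (Real.sin s)) (a := a) (m := 1) (n := n) hn1 hint
  have hone : a 1 = (1:ℝ) * π / (2*(k:ℝ)+1) := by simp [ha]
  rw [← hone, ← hsum]
  -- split top term
  have hsplit : ∑ i ∈ Icc 1 n, Real.log (Real.sin (a i))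
      = ∑ i ∈ Finset.Ico 1 n, Real.log (Real.sin (a i)) + Real.log (Real.sin (a n)) := by
    rw [← Finset.Ico_add_one_right_eq_Icc, Finset.sum_Ico_succ_top hn1]
  rw [hsplit, mul_add, Finset.mul_sum]
  have hterm : ∀ i ∈ Finset.Ico 1 n, h * Real.log (Real.sin (a i))
      ≤ ∫ s in (a i)..(a (i+1)), Real.log (Real.sin s) := by
    intro i hi
    rw [Finset.mem_Ico] at hi
    have := step_lower (hapos i hi.1) (hamono i) (haub (i+1) hi.2)
    rw [hastep i] at this
    exact this
  have hlast : h * Real.log (Real.sin (a n)) ≤ 0 := by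
    apply mul_nonpos_iff.mpr
    left
    exact ⟨hhpos.le, Real.log_nonpos (Real.sin_nonneg_of_nonneg_of_le_pi
      (by positivity) (by linarith [haub n le_rfl, pi_pos])) (Real.sin_le_one _)⟩
  calc (∑ i ∈ Finset.Ico 1 n, h * Real.log (Real.sin (a i))) + h * Real.log (Real.sin (a n))
      ≤ (∑ i ∈ Finset.Ico 1 n, ∫ s in (a i)..(a (i+1)), Real.log (Real.sin s)) + 0 :=
        add_le_add (Finset.sum_le_sum hterm) hlast
    _ = _ := by rw [add_zero]

end riemann


-- === from d.lean ===
noncomputable def Fprim : ℝ → ℝ := fun y => ∫ s in (0:ℝ)..y, Real.log (Real.sin s)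

lemma Fprim_cont : ContinuousOn Fprim (Set.Icc 0 (π/2)) := by
  have hle : (0:ℝ) ≤ π/2 := by positivity
  have hI : IntegrableOn (fun s => Real.log (Real.sin s)) (Set.uIcc 0 (π/2)) volume := by
    rw [Set.uIcc_of_le hle, integrableOn_Icc_iff_integrableOn_Ioc]
    exact (intervalIntegrable_iff_integrableOn_Ioc_of_le hle).mp II_logsin
  have := intervalIntegral.continuousOn_primitive_interval (a := 0) (b := π/2) (μ := volume) hI
  rwa [Set.uIcc_of_le hle] at this

lemma riemann_tendsto (x : ℝ) (hx0 : 0 ≤ x) (hx2 : x ≤ π/2) (n : ℕ → ℕ) (hnk : ∀ k, n k ≤ k)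
    (hn1 : ∀ᶠ k in atTop, 1 ≤ n k)
    (hlim : Tendsto (fun k : ℕ => (n k : ℝ) * π / (2*(k:ℝ)+1)) atTop (nhds x)) :
    Tendsto (fun k : ℕ => (1/(2*(k:ℝ)+1)) *
        ∑ i ∈ Icc 1 (n k), Real.log (Real.sin ((i:ℝ) * π / (2*(k:ℝ)+1)))) atTop
      (nhds ((1/π) * ∫ s in (0:ℝ)..x, Real.log (Real.sin s))) := by
  set y : ℕ → ℝ := fun k => (n k : ℝ) * π / (2*(k:ℝ)+1) with hy
  set hseq : ℕ → ℝ := fun k => π / (2*(k:ℝ)+1) with hh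
  have hy0 : ∀ k, 0 ≤ y k := fun k => by positivity
  have hy2 : ∀ k, y k ≤ π/2 := fun k => pt_le (hnk k)
  have tendy : Tendsto (fun k => Fprim (y k)) atTop (nhds (Fprim x)) := by
    apply ((Fprim_cont.continuousWithinAt ⟨hx0, hx2⟩).tendsto).comp
    rw [tendsto_nhdsWithin_iff]
    exact ⟨hlim, Eventually.of_forall fun k => ⟨hy0 k, hy2 k⟩⟩
  have hdenom : Tendsto (fun k : ℕ => 2*(k:ℝ)+1) atTop atTop := by
    apply tendsto_atTop_add_const_right
    exact (tendsto_natCast_atTop_atTop).const_mul_atTop two_pos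
  have tendh0 : Tendsto hseq atTop (nhds 0) := tendsto_const_nhds.div_atTop hdenom
  have tendh : Tendsto (fun k => Fprim (hseq k)) atTop (nhds 0) := by
    have h0mem : (0:ℝ) ∈ Set.Icc 0 (π/2) := ⟨le_rfl, by positivity⟩
    have hF0 : Fprim 0 = 0 := intervalIntegral.integral_same
    rw [← hF0]
    apply ((Fprim_cont.continuousWithinAt h0mem).tendsto).comp
    rw [tendsto_nhdsWithin_iff]
    refine ⟨tendh0, ?_⟩
    filter_upwards [eventually_ge_atTop 1] with k hk
    constructor
    · have : (0:ℝ) < 2*(k:ℝ)+1 := by positivity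
      positivity
    · rw [hh]
      have hk1 : (1:ℝ) ≤ (k:ℝ) := Nat.one_le_cast.mpr hk
      rw [div_le_div_iff₀ (by positivity) two_pos]
      nlinarith [pi_pos]
  have hπ : (0:ℝ) < π := pi_pos
  have lowlim : Tendsto (fun k => (1/π) * Fprim (y k)) atTop
      (nhds ((1/π) * ∫ s in (0:ℝ)..x, Real.log (Real.sin s))) := tendy.const_mul _
  have uplim : Tendsto (fun k => (1/π) * (Fprim (y k) - Fprim (hseq k))) atTop
      (nhds ((1/π) * ∫ s in (0:ℝ)..x, Real.log (Real.sin s))) := by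
    have := (tendy.sub tendh).const_mul (1/π)
    simpa [Fprim] using this
  apply tendsto_of_tendsto_of_tendsto_of_le_of_le' lowlim uplim
  · filter_upwards with k
    have h1 := riemann_lower (k := k) (n := n k) (hnk k)
    have hk : (0:ℝ) < 2*(k:ℝ)+1 := by positivity
    have heq : (1/π) * ((π / (2*(k:ℝ)+1)) *
        ∑ i ∈ Icc 1 (n k), Real.log (Real.sin ((i:ℝ) * π / (2*(k:ℝ)+1))))
        = (1/(2*(k:ℝ)+1)) * ∑ i ∈ Icc 1 (n k), Real.log (Real.sin ((i:ℝ) * π / (2*(k:ℝ)+1))) := by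
      field_simp
    calc (1/π) * Fprim (y k) ≤ (1/π) * ((π / (2*(k:ℝ)+1)) * ∑ i ∈ Icc 1 (n k),
          Real.log (Real.sin ((i:ℝ) * π / (2*(k:ℝ)+1)))) := by
          apply mul_le_mul_of_nonneg_left h1 (by positivity)
      _ = _ := heq
  · filter_upwards [hn1, eventually_ge_atTop 1] with k hk1 hk2
    have h2 := riemann_upper (k := k) (n := n k) (hnk k) hk1
    have hk : (0:ℝ) < 2*(k:ℝ)+1 := by positivity
    have hhalf : hseq k ≤ π/2 := by
      rw [hh]
      have hk1' : (1:ℝ) ≤ (k:ℝ) := Nat.one_le_cast.mpr hk2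
      rw [div_le_div_iff₀ (by positivity) two_pos]
      nlinarith [pi_pos]
    have hsub : Fprim (y k) - Fprim (hseq k)
        = ∫ s in (hseq k)..(y k), Real.log (Real.sin s) :=
      intervalIntegral.integral_interval_sub_left
        (II_sub le_rfl (hy0 k) (hy2 k))
        (II_sub le_rfl (by rw [hh]; positivity) hhalf)
    have hone : ((1:ℝ) * π / (2*(k:ℝ)+1)) = hseq k := by rw [hh]; ring
    rw [hone] at h2
    have heq : (1/π) * ((π / (2*(k:ℝ)+1)) *
        ∑ i ∈ Icc 1 (n k), Real.log (Real.sin ((i:ℝ) * π / (2*(k:ℝ)+1))))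
        = (1/(2*(k:ℝ)+1)) * ∑ i ∈ Icc 1 (n k), Real.log (Real.sin ((i:ℝ) * π / (2*(k:ℝ)+1))) := by
      field_simp
    calc (1/(2*(k:ℝ)+1)) * ∑ i ∈ Icc 1 (n k), Real.log (Real.sin ((i:ℝ) * π / (2*(k:ℝ)+1)))
        = (1/π) * ((π / (2*(k:ℝ)+1)) * ∑ i ∈ Icc 1 (n k),
            Real.log (Real.sin ((i:ℝ) * π / (2*(k:ℝ)+1)))) := heq.symm
      _ ≤ (1/π) * ∫ s in (hseq k)..(y k), Real.log (Real.sin s) := by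
          apply mul_le_mul_of_nonneg_left h2 (by positivity)
      _ = (1/π) * (Fprim (y k) - Fprim (hseq k)) := by rw [hsub]


-- === from e.lean ===
noncomputable def gpt (k i : ℕ) : ℝ := Real.log (Real.sin ((i:ℝ) * π / (2*(k:ℝ)+1)))
noncomputable def fsum (k n : ℕ) : ℝ := ∑ i ∈ Icc 1 n, gpt k i

section alg
variable {k : ℕ}

lemma cast_d : ((2*k+1 : ℕ) : ℝ) = 2*(k:ℝ)+1 := by push_cast; ring

lemma pt_pos {i : ℕ} (hi : 1 ≤ i) : 0 < (i:ℝ) * π / (2*(k:ℝ)+1) := by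
  have : (1:ℝ) ≤ (i:ℝ) := Nat.one_le_cast.mpr hi
  have := pi_pos
  positivity

lemma sin_pt_pos {i : ℕ} (hi : 1 ≤ i) (hik : i ≤ k) :
    0 < Real.sin ((i:ℝ) * π / (2*(k:ℝ)+1)) :=
  Real.sin_pos_of_pos_of_lt_pi (pt_pos hi)
    (lt_of_le_of_lt (pt_le hik) (by linarith [pi_pos]))

lemma sin_one_pos (hk : 1 ≤ k) : 0 < Real.sin (π / ((2*k+1 : ℕ) : ℝ)) := by
  apply Real.sin_pos_of_pos_of_lt_pi
  · have : (0:ℝ) < ((2*k+1:ℕ):ℝ) := by positivity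
    positivity
  · rw [cast_d]
    rw [div_lt_iff₀ (by positivity)]
    have hk0 : (0:ℝ) ≤ (k:ℝ) := Nat.cast_nonneg k
    have hexp : π * (2*(k:ℝ)+1) = 2*(π*(k:ℝ)) + π := by ring
    rw [hexp]
    have hk1 : (1:ℝ) ≤ (k:ℝ) := Nat.one_le_cast.mpr hk
    nlinarith [pi_pos]

lemma qInt_pos {i : ℕ} (hi : 1 ≤ i) (hik : i ≤ k) : 0 < qInt (2*k+1) i := by
  unfold qInt
  apply div_pos ?_ (sin_one_pos (le_trans hi hik))
  rw [cast_d]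
  exact sin_pt_pos hi hik

lemma qFact_pos {n : ℕ} (hn : n ≤ k) : 0 < qFact (2*k+1) n := by
  unfold qFact
  apply Finset.prod_pos
  intro i hi
  rw [Finset.mem_Icc] at hi
  exact qInt_pos hi.1 (le_trans hi.2 hn)

lemma log_qFact {n : ℕ} (hn : n ≤ k) :
    Real.log (qFact (2*k+1) n) = fsum k n - n * Real.log (Real.sin (π / (2*(k:ℝ)+1))) := by
  unfold qFact
  rw [Real.log_prod]
  · unfold fsum
    have hconst : (n : ℝ) * Real.log (Real.sin (π / (2*(k:ℝ)+1)))
        = ∑ _i ∈ Icc 1 n, Real.log (Real.sin (π / (2*(k:ℝ)+1))) := by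
      rw [Finset.sum_const, Nat.card_Icc]
      simp [nsmul_eq_mul]
    rw [hconst, ← Finset.sum_sub_distrib]
    apply Finset.sum_congr rfl
    intro i hi
    rw [Finset.mem_Icc] at hi
    unfold qInt gpt
    have hk1 : 1 ≤ k := le_trans hi.1 (le_trans hi.2 hn)
    have hnum : Real.sin ((i:ℝ) * π / ((2*k+1:ℕ):ℝ)) ≠ 0 := by
      rw [cast_d]; exact (sin_pt_pos hi.1 (le_trans hi.2 hn)).ne'
    have hden : Real.sin (π / ((2*k+1:ℕ):ℝ)) ≠ 0 := (sin_one_pos hk1).ne'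
    rw [Real.log_div hnum hden, cast_d]
  · intro i hi
    rw [Finset.mem_Icc] at hi
    exact (qInt_pos hi.1 (le_trans hi.2 hn)).ne'

lemma qBinom_pos {j : ℕ} (hj : j ≤ k) : 0 < qBinom (2*k+1) k j := by
  unfold qBinom
  exact div_pos (qFact_pos le_rfl) (mul_pos (qFact_pos hj) (qFact_pos (Nat.sub_le k j)))

lemma log_qBinom {j : ℕ} (hj : j ≤ k) :
    Real.log (qBinom (2*k+1) k j) = fsum k k - fsum k j - fsum k (k-j) := by
  unfold qBinom
  rw [Real.log_div (qFact_pos le_rfl).ne'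
    (mul_pos (qFact_pos hj) (qFact_pos (Nat.sub_le k j))).ne',
    Real.log_mul (qFact_pos hj).ne' (qFact_pos (Nat.sub_le k j)).ne',
    log_qFact le_rfl, log_qFact hj, log_qFact (Nat.sub_le k j)]
  have : ((k - j : ℕ) : ℝ) = (k:ℝ) - (j:ℝ) := by
    rw [Nat.cast_sub hj]
  rw [this]
  ring

/-- One-step comparison. -/
lemma Lg_step {j : ℕ} (hj : j < k) :
    (fsum k k - fsum k (j+1) - fsum k (k-(j+1))) - (fsum k k - fsum k j - fsum k (k-j))
      = gpt k (k-j) - gpt k (j+1) := by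
  have h1 : fsum k (j+1) = fsum k j + gpt k (j+1) := by
    unfold fsum
    rw [← Finset.Ico_add_one_right_eq_Icc, Finset.sum_Ico_succ_top (Nat.succ_le_succ (Nat.zero_le _))]
    simp only [Nat.succ_eq_add_one, zero_add, Finset.Ico_add_one_right_eq_Icc]
  have h2 : k - j = (k - (j+1)) + 1 := by omega
  have h3 : fsum k (k-j) = fsum k (k-(j+1)) + gpt k (k-j) := by
    rw [h2]
    unfold fsum
    rw [← Finset.Ico_add_one_right_eq_Icc, Finset.sum_Ico_succ_top (Nat.succ_le_succ (Nat.zero_le _))]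
    simp only [Nat.succ_eq_add_one, zero_add, Finset.Ico_add_one_right_eq_Icc]
  rw [h1, h3]
  ring

lemma gpt_mono {p q : ℕ} (hp : 1 ≤ p) (hpq : p ≤ q) (hq : q ≤ k) : gpt k p ≤ gpt k q := by
  unfold gpt
  apply g_mono (pt_pos hp) ?_ (pt_le hq)
  have : (p:ℝ) ≤ (q:ℝ) := Nat.cast_le.mpr hpq
  have := pi_pos
  gcongr

/-- unimodality: all values bounded by the middle one -/
lemma Lg_le_mid {j : ℕ} (hj : j ≤ k) :
    fsum k k - fsum k j - fsum k (k-j) ≤ fsum k k - fsum k (k/2) - fsum k (k-(k/2)) := by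
  set Lg : ℕ → ℝ := fun j => fsum k k - fsum k j - fsum k (k-j) with hLg
  have hup : ∀ i : ℕ, i < k/2 → Lg i ≤ Lg (i+1) := by
    intro i hi
    have hik : i < k := lt_of_lt_of_le hi (Nat.div_le_self k 2)
    have hstep := Lg_step hik
    have : gpt k (i+1) ≤ gpt k (k-i) := by
      apply gpt_mono (Nat.succ_le_succ (Nat.zero_le _)) (by omega) (by omega)
    have : Lg (i+1) - Lg i = gpt k (k-i) - gpt k (i+1) := hstep
    linarith
  have hdown : ∀ i : ℕ, k/2 ≤ i → i < k → Lg (i+1) ≤ Lg i := by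
    intro i hi hik
    have hstep := Lg_step hik
    have : gpt k (k-i) ≤ gpt k (i+1) := by
      apply gpt_mono (by omega) (by omega) (by omega)
    have h4 : Lg (i+1) - Lg i = gpt k (k-i) - gpt k (i+1) := hstep
    linarith
  rcases le_or_gt j (k/2) with h | h
  · -- increasing chain from j to k/2
    have : ∀ m : ℕ, m ≤ k/2 → j ≤ k/2 - m → Lg (k/2 - m) ≤ Lg (k/2) := by
      intro m
      induction m with
      | zero => intro _ _; simp
      | succ p ih =>
        intro hm hjm
        have h5 : k/2 - (p+1) + 1 = k/2 - p := by omega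
        have h6 := hup (k/2 - (p+1)) (by omega)
        rw [h5] at h6
        exact le_trans h6 (ih (by omega) (by omega))
    have := this (k/2 - j) (by omega) (by omega)
    rwa [show k/2 - (k/2 - j) = j by omega] at this
  · -- decreasing chain from k/2 to j
    have : ∀ m : ℕ, k/2 + m ≤ k → Lg (k/2 + m) ≤ Lg (k/2) := by
      intro m
      induction m with
      | zero => intro _; simp
      | succ p ih =>
        intro hm
        have h6 := hdown (k/2 + p) (by omega) (by omega)
        rw [show k/2 + p + 1 = k/2 + (p+1) by omega] at h6
        exact le_trans h6 (ih (by omega))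
    have := this (j - k/2) (by omega)
    rwa [show k/2 + (j - k/2) = j by omega] at this

end alg


-- === from f.lean ===


-- linear limits
lemma denom_tendsto : Tendsto (fun k : ℕ => 2*(k:ℝ)+1) atTop atTop := by
  apply tendsto_atTop_add_const_right
  exact (tendsto_natCast_atTop_atTop).const_mul_atTop two_pos

lemma inv_denom_tendsto : Tendsto (fun k : ℕ => 1/(2*(k:ℝ)+1)) atTop (nhds 0) :=
  tendsto_const_nhds.div_atTop denom_tendsto

lemma lin_tendsto (c e : ℝ) :
    Tendsto (fun k : ℕ => (c*(k:ℝ) + e) * π/(2*(k:ℝ)+1)) atTop (nhds (c*π/2)) := by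
  have hfun : ∀ k : ℕ, (c*(k:ℝ) + e) * π/(2*(k:ℝ)+1)
      = c*π/2 + ((e - c/2)*π) * (1/(2*(k:ℝ)+1)) := by
    intro k
    have hk : (0:ℝ) < 2*(k:ℝ)+1 := by positivity
    field_simp
    ring
  have h := (tendsto_const_nhds (x := c*π/2) (f := atTop (α := ℕ))).add
    (inv_denom_tendsto.const_mul ((e - c/2)*π))
  rw [mul_zero, add_zero] at h
  exact h.congr (fun k => (hfun k).symm)

lemma lim_k : Tendsto (fun k : ℕ => (k:ℝ) * π/(2*(k:ℝ)+1)) atTop (nhds (π/2)) := by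
  have h := lin_tendsto 1 0
  simp only [one_mul, add_zero] at h
  exact h.congr (fun k => by ring)

lemma lim_floor : Tendsto (fun k : ℕ => ((k/2 : ℕ):ℝ) * π/(2*(k:ℝ)+1)) atTop (nhds (π/4)) := by
  have hlow := lin_tendsto (1/2) (-(1/2))
  have hup := lin_tendsto (1/2) 0
  rw [show (1/2 : ℝ)*π/2 = π/4 by ring] at hlow hup
  apply tendsto_of_tendsto_of_tendsto_of_le_of_le' hlow hup
  · filter_upwards with k
    have h1 : (k:ℝ) - 1 ≤ 2*((k/2 : ℕ):ℝ) := by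
      have h : k ≤ 2*(k/2) + 1 := by omega
      have h' := (Nat.cast_le (α := ℝ)).mpr h
      push_cast at h'
      linarith
    have hπ := pi_pos
    gcongr
    linarith
  · filter_upwards with k
    have h1 : 2*((k/2 : ℕ):ℝ) ≤ (k:ℝ) := by
      have h : 2*(k/2) ≤ k := by omega
      have h' := (Nat.cast_le (α := ℝ)).mpr h
      push_cast at h'
      linarith
    have hπ := pi_pos
    gcongr
    linarith

lemma lim_ceil : Tendsto (fun k : ℕ => ((k - k/2 : ℕ):ℝ) * π/(2*(k:ℝ)+1)) atTop (nhds (π/4)) := by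
  have hlow := lin_tendsto (1/2) 0
  have hup := lin_tendsto (1/2) (1/2)
  rw [show (1/2 : ℝ)*π/2 = π/4 by ring] at hlow hup
  apply tendsto_of_tendsto_of_tendsto_of_le_of_le' hlow hup
  · filter_upwards with k
    have h1 : (k:ℝ) ≤ 2*(((k - k/2) : ℕ):ℝ) := by
      have h : k ≤ 2*(k - k/2) := by omega
      have h' := (Nat.cast_le (α := ℝ)).mpr h
      push_cast at h'
      linarith
    have hπ := pi_pos
    gcongr
    linarith
  · filter_upwards with k
    have h1 : 2*(((k - k/2) : ℕ):ℝ) ≤ (k:ℝ) + 1 := by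
      have h : 2*(k - k/2) ≤ k + 1 := by omega
      have h' := (Nat.cast_le (α := ℝ)).mpr h
      push_cast at h'
      linarith
    have hπ := pi_pos
    gcongr
    linarith

lemma log_succ_div_tendsto :
    Tendsto (fun k : ℕ => Real.log ((k:ℝ)+1) * (1/(2*(k:ℝ)+1))) atTop (nhds 0) := by
  have H := Real.tendsto_pow_log_div_mul_add_atTop 2 (-1) 1 two_ne_zero
  have hcomp : Tendsto (fun k : ℕ => (k:ℝ)+1) atTop atTop :=
    tendsto_atTop_add_const_right _ 1 tendsto_natCast_atTop_atTop
  have h2 := H.comp hcomp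
  apply h2.congr
  intro k
  simp only [Function.comp_apply, pow_one]
  rw [div_eq_mul_one_div]
  congr 2
  ring


-- === from g.lean ===

/-- Extended Volume Conjecture for universal hyperbolic links: for every `c ≥ 1`,
`lim_{k→∞} (1/(2k+1)) log( ( ∑_{j=0}^k [k choose j]_{2k+1}^4 )^c ) = (8c/π) Λ(π/4)
= 2c·Vol_Oct/(2π)`. -/
theorem stmt_12 (c : ℕ) (hc : 0 < c) :
    Filter.Tendsto
      (fun k : ℕ =>
        (1 / (2 * (k : ℝ) + 1)) *
          Real.log ((∑ j ∈ Finset.range (k + 1), (qBinom (2 * k + 1) k j) ^ 4) ^ c))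
      Filter.atTop (nhds ((8 * (c : ℝ) / Real.pi) * Lob (Real.pi / 4))) ∧
    (8 * (c : ℝ) / Real.pi) * Lob (Real.pi / 4) = 2 * (c : ℝ) * VolOct / (2 * Real.pi) := by
  have hπ : (0:ℝ) < π := pi_pos
  have hπ4 : (0:ℝ) ≤ π/4 := by positivity
  have hπ42 : π/4 ≤ π/2 := by linarith
  set J : ℝ := ∫ s in (0:ℝ)..(π/4), Real.log (Real.sin s) with hJ
  -- Lob (π/4) in terms of J
  have hLobJ : Lob (π/4) = -((π/4) * Real.log 2 + J) := by
    unfold Lob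
    congr 1
    have hcongr : ∫ s in (0:ℝ)..(π/4), Real.log |2 * Real.sin s|
        = ∫ s in (0:ℝ)..(π/4), (Real.log 2 + Real.log (Real.sin s)) := by
      apply intervalIntegral.integral_congr_ae
      filter_upwards with s hs
      rw [Set.uIoc_of_le hπ4] at hs
      have hs0 : 0 < s := hs.1
      have hsin : 0 < Real.sin s :=
        Real.sin_pos_of_pos_of_lt_pi hs0 (lt_of_le_of_lt hs.2 (by linarith))
      rw [abs_of_pos (by positivity), Real.log_mul two_ne_zero hsin.ne']
    rw [hcongr, intervalIntegral.integral_add intervalIntegrable_const (II_sub le_rfl hπ4 hπ42),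
      intervalIntegral.integral_const]
    rw [← hJ]
    simp
  constructor
  · -- the limit
    have hT1 := riemann_tendsto (π/2) (by positivity) le_rfl (fun k => k)
      (fun k => le_rfl) (eventually_ge_atTop 1) lim_k
    have hT2 := riemann_tendsto (π/4) hπ4 hπ42 (fun k => k/2)
      (fun k => Nat.div_le_self k 2)
      ((eventually_ge_atTop 2).mono (fun k hk => by show 1 ≤ k/2; omega)) lim_floor
    have hT3 := riemann_tendsto (π/4) hπ4 hπ42 (fun k => k - k/2)
      (fun k => Nat.sub_le k _)
      ((eventually_ge_atTop 1).mono (fun k hk => by show 1 ≤ k - k/2; omega)) lim_ceil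
    rw [integral_logsin_half] at hT1
    rw [← hJ] at hT2 hT3
    have hT1' : Tendsto (fun k : ℕ => (1/(2*(k:ℝ)+1)) * fsum k k) atTop
        (nhds ((1/π) * (-(π/2) * Real.log 2))) := hT1
    have hT2' : Tendsto (fun k : ℕ => (1/(2*(k:ℝ)+1)) * fsum k (k/2)) atTop
        (nhds ((1/π) * J)) := hT2
    have hT3' : Tendsto (fun k : ℕ => (1/(2*(k:ℝ)+1)) * fsum k (k - k/2)) atTop
        (nhds ((1/π) * J)) := hT3
    have hmid : Tendsto (fun k : ℕ =>
        (1/(2*(k:ℝ)+1)) * (fsum k k - fsum k (k/2) - fsum k (k - k/2))) atTop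
        (nhds ((1/π) * (-(π/2) * Real.log 2) - (1/π) * J - (1/π) * J)) := by
      have h := (hT1'.sub hT2').sub hT3'
      exact h.congr (fun k => by ring)
    set L : ℝ := (1/π) * (-(π/2) * Real.log 2) - (1/π) * J - (1/π) * J with hL
    have hval : (c:ℝ) * (4 * L) = (8 * (c:ℝ) / π) * Lob (π/4) := by
      rw [hLobJ, hL]
      field_simp
      ring
    have hlowlim : Tendsto (fun k : ℕ => (c:ℝ) * (4 * ((1/(2*(k:ℝ)+1)) *
        (fsum k k - fsum k (k/2) - fsum k (k - k/2))))) atTop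
        (nhds ((c:ℝ) * (4 * L))) := (hmid.const_mul 4).const_mul (c:ℝ)
    have huplim : Tendsto (fun k : ℕ => (c:ℝ) * (4 * ((1/(2*(k:ℝ)+1)) *
        (fsum k k - fsum k (k/2) - fsum k (k - k/2))))
          + (c:ℝ) * (Real.log ((k:ℝ)+1) * (1/(2*(k:ℝ)+1)))) atTop
        (nhds ((c:ℝ) * (4 * L))) := by
      have h := hlowlim.add (log_succ_div_tendsto.const_mul (c:ℝ))
      rw [mul_zero, add_zero] at h
      exact h
    rw [← hval]
    apply tendsto_of_tendsto_of_tendsto_of_le_of_le' hlowlim huplim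
    · -- lower bound
      filter_upwards with k
      have hd : (0:ℝ) < 1/(2*(k:ℝ)+1) := by positivity
      have hc0 : (0:ℝ) ≤ (c:ℝ) := Nat.cast_nonneg c
      have hm : k/2 ≤ k := Nat.div_le_self k 2
      have hbm := qBinom_pos (k := k) hm
      have hS_lb : qBinom (2*k+1) k (k/2) ^ 4
          ≤ ∑ j ∈ Finset.range (k+1), qBinom (2*k+1) k j ^ 4 := by
        apply Finset.single_le_sum (f := fun j => qBinom (2*k+1) k j ^ 4)
        · intro j hj
          rw [Finset.mem_range] at hj
          exact pow_nonneg (qBinom_pos (by omega)).le 4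
        · rw [Finset.mem_range]; omega
      have hS_pos : 0 < ∑ j ∈ Finset.range (k+1), qBinom (2*k+1) k j ^ 4 :=
        lt_of_lt_of_le (pow_pos hbm 4) hS_lb
      rw [Real.log_pow]
      have hlog4 : Real.log (qBinom (2*k+1) k (k/2) ^ 4)
          = 4 * (fsum k k - fsum k (k/2) - fsum k (k - k/2)) := by
        rw [Real.log_pow, log_qBinom hm]
        norm_num
      have hloglb : 4 * (fsum k k - fsum k (k/2) - fsum k (k - k/2))
          ≤ Real.log (∑ j ∈ Finset.range (k+1), qBinom (2*k+1) k j ^ 4) := by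
        rw [← hlog4]
        exact Real.log_le_log (pow_pos hbm 4) hS_lb
      calc (c:ℝ) * (4 * ((1/(2*(k:ℝ)+1)) * (fsum k k - fsum k (k/2) - fsum k (k - k/2))))
          = (1/(2*(k:ℝ)+1)) * ((c:ℝ) * (4 * (fsum k k - fsum k (k/2) - fsum k (k - k/2)))) := by
            ring
        _ ≤ (1/(2*(k:ℝ)+1)) * ((c:ℝ) *
            Real.log (∑ j ∈ Finset.range (k+1), qBinom (2*k+1) k j ^ 4)) := by
            apply mul_le_mul_of_nonneg_left (mul_le_mul_of_nonneg_left hloglb hc0) hd.le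
        _ = (1/(2*(k:ℝ)+1)) * ((c:ℝ) *
            Real.log (∑ j ∈ Finset.range (k+1), qBinom (2*k+1) k j ^ 4)) := rfl
    · -- upper bound
      filter_upwards with k
      have hd : (0:ℝ) < 1/(2*(k:ℝ)+1) := by positivity
      have hc0 : (0:ℝ) ≤ (c:ℝ) := Nat.cast_nonneg c
      have hm : k/2 ≤ k := Nat.div_le_self k 2
      have hbm := qBinom_pos (k := k) hm
      have hS_lb : qBinom (2*k+1) k (k/2) ^ 4
          ≤ ∑ j ∈ Finset.range (k+1), qBinom (2*k+1) k j ^ 4 := by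
        apply Finset.single_le_sum (f := fun j => qBinom (2*k+1) k j ^ 4)
        · intro j hj
          rw [Finset.mem_range] at hj
          exact pow_nonneg (qBinom_pos (by omega)).le 4
        · rw [Finset.mem_range]; omega
      have hS_pos : 0 < ∑ j ∈ Finset.range (k+1), qBinom (2*k+1) k j ^ 4 :=
        lt_of_lt_of_le (pow_pos hbm 4) hS_lb
      have hS_ub : ∑ j ∈ Finset.range (k+1), qBinom (2*k+1) k j ^ 4
          ≤ ((k:ℝ)+1) * qBinom (2*k+1) k (k/2) ^ 4 := by
        have h := Finset.sum_le_card_nsmul (Finset.range (k+1))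
          (fun j => qBinom (2*k+1) k j ^ 4) (qBinom (2*k+1) k (k/2) ^ 4) ?_
        · rw [Finset.card_range, nsmul_eq_mul] at h
          push_cast at h
          exact h
        · intro j hj
          rw [Finset.mem_range] at hj
          have hjk : j ≤ k := by omega
          apply pow_le_pow_left₀ (qBinom_pos hjk).le
          have := Lg_le_mid (k := k) hjk
          rw [← log_qBinom hjk, ← log_qBinom hm] at this
          exact (Real.log_le_log_iff (qBinom_pos hjk) hbm).mp this
      rw [Real.log_pow]
      have hlog4 : Real.log (qBinom (2*k+1) k (k/2) ^ 4)
          = 4 * (fsum k k - fsum k (k/2) - fsum k (k - k/2)) := by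
        rw [Real.log_pow, log_qBinom hm]
        norm_num
      have hlogub : Real.log (∑ j ∈ Finset.range (k+1), qBinom (2*k+1) k j ^ 4)
          ≤ Real.log ((k:ℝ)+1) + 4 * (fsum k k - fsum k (k/2) - fsum k (k - k/2)) := by
        calc Real.log (∑ j ∈ Finset.range (k+1), qBinom (2*k+1) k j ^ 4)
            ≤ Real.log (((k:ℝ)+1) * qBinom (2*k+1) k (k/2) ^ 4) :=
              Real.log_le_log hS_pos hS_ub
          _ = Real.log ((k:ℝ)+1) + 4 * (fsum k k - fsum k (k/2) - fsum k (k - k/2)) := by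
              rw [Real.log_mul (by positivity) (pow_pos hbm 4).ne', hlog4]
      calc (1/(2*(k:ℝ)+1)) * ((c:ℝ) *
            Real.log (∑ j ∈ Finset.range (k+1), qBinom (2*k+1) k j ^ 4))
          ≤ (1/(2*(k:ℝ)+1)) * ((c:ℝ) * (Real.log ((k:ℝ)+1)
              + 4 * (fsum k k - fsum k (k/2) - fsum k (k - k/2)))) := by
            apply mul_le_mul_of_nonneg_left (mul_le_mul_of_nonneg_left hlogub hc0) hd.le
        _ = (c:ℝ) * (4 * ((1/(2*(k:ℝ)+1)) * (fsum k k - fsum k (k/2) - fsum k (k - k/2))))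
              + (c:ℝ) * (Real.log ((k:ℝ)+1) * (1/(2*(k:ℝ)+1))) := by
            ring
  · -- the equality
    unfold VolOct
    field_simp
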